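/- arXiv:2505.04355 — 2 statements merged into one kernel-verified Lean document; each statement's English description precedes it below -/
import Mathlib

section
/- With M^μ as above and μᵢ ∉ ℤ for all i, M^μ is a simple 𝔤-module: any nonzero 𝔤-submodule equals M^μ. -/
/-!
STATEMENT 2: For μ ∈ ℂ^{n+1} with μᵢ ∉ ℤ for all i, M^μ is a simple 𝔤-module
(𝔤 = 𝔰𝔩_{n+1}(ℂ) or 𝔤𝔩_{n+1}(ℂ)): any nonzero submodule equals M^μ.

M^μ is modelled on its monomial basis t^{μ+m}, m ∈ ℤ^{n+1}, Σm = 0; the root vectors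
x_{εᵢ−εⱼ} act as tᵢ∂/∂tⱼ, a diagonal element x acts on t^λ by Σ xᵢλᵢ.  A 𝔤-submodule
is a subspace stable under all these operators.
-/

open Finsupp

def ExpLat (n : ℕ) : Type := {m : Fin (n + 1) → ℤ // ∑ l, m l = 0}

abbrev CuspMod (n : ℕ) : Type := ExpLat n →₀ ℂ

def shiftFun {n : ℕ} (i j : Fin (n + 1)) (m : Fin (n + 1) → ℤ) : Fin (n + 1) → ℤ :=
  fun l => m l + (if l = i then 1 else 0) - (if l = j then 1 else 0)

lemma shiftFun_sum {n : ℕ} (i j : Fin (n + 1)) (m : Fin (n + 1) → ℤ)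
    (h : ∑ l, m l = 0) : ∑ l, shiftFun i j m l = 0 := by
  simp [shiftFun, Finset.sum_add_distrib, Finset.sum_sub_distrib, h]

def shift {n : ℕ} (i j : Fin (n + 1)) (m : ExpLat n) : ExpLat n :=
  ⟨shiftFun i j m.1, shiftFun_sum i j m.1 m.2⟩

/-- The root operator `x_{εᵢ−εⱼ} = tᵢ ∂/∂tⱼ`. -/
noncomputable def xOp {n : ℕ} (μ : Fin (n + 1) → ℂ) (i j : Fin (n + 1)) :
    CuspMod n →ₗ[ℂ] CuspMod n :=
  Finsupp.lsum ℂ fun m => (μ j + (m.1 j : ℂ)) • Finsupp.lsingle (shift i j m)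

/-- Action of the diagonal torus element `x`. -/
noncomputable def hOp {n : ℕ} (μ : Fin (n + 1) → ℂ) (x : Fin (n + 1) → ℂ) :
    CuspMod n →ₗ[ℂ] CuspMod n :=
  Finsupp.lsum ℂ fun m => (∑ l, x l * (μ l + (m.1 l : ℂ))) • Finsupp.lsingle m

-- auxiliary lemmas

lemma ExpLat.ext' {n : ℕ} {a b : ExpLat n} (h : a.1 = b.1) : a = b := Subtype.ext h

lemma hOp_single' {n : ℕ} (μ x : Fin (n + 1) → ℂ) (m : ExpLat n) (c : ℂ) :
    hOp μ x (Finsupp.single m c)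
      = Finsupp.single m ((∑ l, x l * (μ l + (m.1 l : ℂ))) * c) := by
  simp [hOp, Finsupp.smul_single, mul_comm]

lemma xOp_single' {n : ℕ} (μ : Fin (n + 1) → ℂ) (i j : Fin (n + 1)) (m : ExpLat n) (c : ℂ) :
    xOp μ i j (Finsupp.single m c)
      = Finsupp.single (shift i j m) ((μ j + (m.1 j : ℂ)) * c) := by
  simp [xOp, Finsupp.smul_single]

lemma hOp_apply' {n : ℕ} (μ x : Fin (n + 1) → ℂ) (f : CuspMod n) (m : ExpLat n) :
    hOp μ x f m = (∑ l, x l * (μ l + (m.1 l : ℂ))) * f m := by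
  classical
  induction f using Finsupp.induction_linear with
  | zero => simp
  | add f g hf hg => simp [hf, hg, mul_add]
  | single a b =>
    rw [hOp_single']
    rcases eq_or_ne a m with rfl | h
    · simp
    · simp [Finsupp.single_apply, h]

lemma mu_add_ne_zero {n : ℕ} {μ : Fin (n + 1) → ℂ}
    (hμ : ∀ i : Fin (n + 1), ∀ k : ℤ, μ i ≠ (k : ℂ)) (j : Fin (n + 1)) (a : ℤ) :
    μ j + (a : ℂ) ≠ 0 := by
  intro h
  exact hμ j (-a) (by push_cast; linear_combination h)

/-- One shift step stays in `N`. -/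
lemma step_mem {n : ℕ} {μ : Fin (n + 1) → ℂ}
    (hμ : ∀ i : Fin (n + 1), ∀ k : ℤ, μ i ≠ (k : ℂ))
    {N : Submodule ℂ (CuspMod n)}
    (hXstab : ∀ i j : Fin (n + 1), i ≠ j → ∀ f ∈ N, xOp μ i j f ∈ N)
    {a : ExpLat n} (i j : Fin (n + 1)) (hij : i ≠ j)
    (ha : Finsupp.single a (1 : ℂ) ∈ N) :
    Finsupp.single (shift i j a) (1 : ℂ) ∈ N := by
  have hx := hXstab i j hij _ ha
  rw [xOp_single', mul_one] at hx
  have hc : μ j + (a.1 j : ℂ) ≠ 0 := mu_add_ne_zero hμ j _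
  have := N.smul_mem (μ j + (a.1 j : ℂ))⁻¹ hx
  rwa [Finsupp.smul_single, smul_eq_mul, inv_mul_cancel₀ hc] at this

/-- From one monomial one reaches any other monomial. -/
lemma reach_mem {n : ℕ} {μ : Fin (n + 1) → ℂ}
    (hμ : ∀ i : Fin (n + 1), ∀ k : ℤ, μ i ≠ (k : ℂ))
    {N : Submodule ℂ (CuspMod n)}
    (hXstab : ∀ i j : Fin (n + 1), i ≠ j → ∀ f ∈ N, xOp μ i j f ∈ N) :
    ∀ k : ℕ, ∀ a b : ExpLat n, (∑ l, (b.1 l - a.1 l).natAbs) ≤ k →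
      Finsupp.single a (1 : ℂ) ∈ N → Finsupp.single b (1 : ℂ) ∈ N := by
  intro k
  induction k with
  | zero =>
    intro a b hd ha
    have hab : a = b := by
      apply ExpLat.ext'
      funext l
      have : (b.1 l - a.1 l).natAbs = 0 := by
        have := Finset.sum_eq_zero_iff.mp (Nat.le_zero.mp hd) l (Finset.mem_univ l)
        exact this
      omega
    rwa [hab] at ha
  | succ k ih =>
    intro a b hd ha
    rcases eq_or_ne a b with rfl | hab
    · exact ha
    -- find i with b_i > a_i and j with b_j < a_j
    have hsum : ∑ l, (b.1 l - a.1 l) = 0 := by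
      rw [Finset.sum_sub_distrib, a.2, b.2]; ring
    have hex : ∃ l, b.1 l - a.1 l ≠ 0 := by
      by_contra h
      push_neg at h
      exact hab (ExpLat.ext' (funext fun l => by have := h l; omega))
    obtain ⟨l0, hl0⟩ := hex
    have hi : ∃ i, 0 < b.1 i - a.1 i := by
      by_contra h
      push_neg at h
      have hz : ∀ l ∈ Finset.univ, a.1 l - b.1 l = 0 := by
        intro l _
        have h1 : 0 ≤ a.1 l - b.1 l := by have := h l; omega
        have h2 : ∑ l, (a.1 l - b.1 l) = 0 := by
          rw [Finset.sum_sub_distrib, a.2, b.2]; ring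
        have := (Finset.sum_eq_zero_iff_of_nonneg (fun l _ => by have := h l; omega)).mp h2 l
          (Finset.mem_univ l)
        omega
      have := hz l0 (Finset.mem_univ l0); omega
    obtain ⟨i, hi⟩ := hi
    have hj : ∃ j, b.1 j - a.1 j < 0 := by
      by_contra h
      push_neg at h
      have := (Finset.sum_eq_zero_iff_of_nonneg (fun l _ => h l)).mp hsum i (Finset.mem_univ i)
      omega
    obtain ⟨j, hj⟩ := hj
    have hij : i ≠ j := by intro h; rw [h] at hi; omega
    have ha' : Finsupp.single (shift i j a) (1 : ℂ) ∈ N := step_mem hμ hXstab i j hij ha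
    refine ih (shift i j a) b ?_ ha'
    have hlt : (∑ l, (b.1 l - (shift i j a).1 l).natAbs) < ∑ l, (b.1 l - a.1 l).natAbs := by
      refine Finset.sum_lt_sum ?_ ⟨i, Finset.mem_univ i, ?_⟩
      · intro l _
        show (b.1 l - shiftFun i j a.1 l).natAbs ≤ (b.1 l - a.1 l).natAbs
        simp only [shiftFun]
        rcases eq_or_ne l i with rfl | hli
        · simp only [if_pos rfl, if_neg hij]; omega
        · rcases eq_or_ne l j with rfl | hlj
          · simp only [if_neg hli, if_pos rfl]; omega
          · simp [hli, hlj]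
      · show (b.1 i - shiftFun i j a.1 i).natAbs < (b.1 i - a.1 i).natAbs
        simp only [shiftFun, if_neg hij, eq_self_iff_true, if_true]
        omega
    exact Nat.lt_succ_iff.mp (lt_of_lt_of_le hlt hd)

/-- Extract a monomial from any nonzero element of `N`. -/
lemma extract_mem {n : ℕ} {μ : Fin (n + 1) → ℂ}
    {N : Submodule ℂ (CuspMod n)}
    (hHstab : ∀ x : Fin (n + 1) → ℂ, ∀ f ∈ N, hOp μ x f ∈ N) :
    ∀ k : ℕ, ∀ f ∈ N, ∀ m ∈ f.support, f.support.card ≤ k →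
      Finsupp.single m (1 : ℂ) ∈ N := by
  classical
  intro k
  induction k with
  | zero =>
    intro f _ m hm hc
    rw [Nat.le_zero, Finset.card_eq_zero] at hc
    rw [hc] at hm
    exact absurd hm (Finset.notMem_empty m)
  | succ k ih =>
    intro f hf m hm hc
    have hfm : f m ≠ 0 := Finsupp.mem_support_iff.mp hm
    by_cases h : ∃ m1 ∈ f.support, m1 ≠ m
    · obtain ⟨m1, hm1, hne⟩ := h
      have hl : ∃ l, m1.1 l ≠ m.1 l := by
        by_contra hcon
        push_neg at hcon
        exact hne (ExpLat.ext' (funext hcon))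
      obtain ⟨l, hl⟩ := hl
      set x : Fin (n + 1) → ℂ := fun l' => if l' = l then 1 else 0 with hx
      have hval : ∀ m' : ExpLat n,
          (∑ l', x l' * (μ l' + ((m'.1 l' : ℤ) : ℂ))) = μ l + (m'.1 l : ℂ) := by
        intro m'
        rw [Finset.sum_eq_single l]
        · simp [hx]
        · intro b _ hb; simp [hx, hb]
        · intro hmem; exact absurd (Finset.mem_univ l) hmem
      set g : CuspMod n := hOp μ x f - (μ l + (m1.1 l : ℂ)) • f with hg
      have hgN : g ∈ N := N.sub_mem (hHstab x f hf) (N.smul_mem _ hf)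
      have hgval : ∀ m' : ExpLat n, g m' = ((m'.1 l - m1.1 l : ℤ) : ℂ) * f m' := by
        intro m'
        rw [hg]
        rw [Finsupp.sub_apply, Finsupp.smul_apply, hOp_apply', hval m', smul_eq_mul]
        push_cast
        ring
      have hsub : g.support ⊆ f.support.erase m1 := by
        intro m' hm'
        have hg' : g m' ≠ 0 := Finsupp.mem_support_iff.mp hm'
        rw [hgval] at hg'
        rw [Finset.mem_erase, Finsupp.mem_support_iff]
        constructor
        · intro hcon; rw [hcon] at hg'; simp at hg'
        · intro hcon; rw [hcon] at hg'; simp at hg'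
      have hmg : m ∈ g.support := by
        rw [Finsupp.mem_support_iff, hgval]
        refine mul_ne_zero ?_ hfm
        rw [Int.cast_ne_zero]
        omega
      have hcard : g.support.card ≤ k := by
        have h1 := Finset.card_le_card hsub
        have h2 := Finset.card_erase_of_mem hm1
        have h3 : 1 ≤ f.support.card := Finset.card_pos.mpr ⟨m1, hm1⟩
        omega
      exact ih g hgN m hmg hcard
    · push_neg at h
      have hfs : (f m)⁻¹ • f = Finsupp.single m (1 : ℂ) := by
        ext a
        rcases eq_or_ne a m with rfl | hne
        · simp [inv_mul_cancel₀ hfm]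
        · have : f a = 0 := by
            by_contra hcon
            exact hne (h a (Finsupp.mem_support_iff.mpr hcon))
          simp [this, Finsupp.single_apply, hne.symm]
      rw [← hfs]
      exact N.smul_mem _ hf

/-- `M^μ` is simple — every nonzero subspace stable under all root
operators and the torus action is all of `M^μ`. -/
theorem cuspMod_simple (n : ℕ) (μ : Fin (n + 1) → ℂ)
    (hμ : ∀ i : Fin (n + 1), ∀ k : ℤ, μ i ≠ (k : ℂ))
    (N : Submodule ℂ (CuspMod n))
    (hXstab : ∀ i j : Fin (n + 1), i ≠ j → ∀ f ∈ N, xOp μ i j f ∈ N)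
    (hHstab : ∀ x : Fin (n + 1) → ℂ, ∀ f ∈ N, hOp μ x f ∈ N)
    (hN : N ≠ ⊥) :
    N = ⊤ := by
  classical
  -- get a nonzero element
  obtain ⟨f, hfN, hf0⟩ : ∃ f ∈ N, f ≠ 0 := by
    by_contra h
    push_neg at h
    exact hN (le_antisymm (fun y hy => h y hy) bot_le)
  obtain ⟨m0, hm0⟩ : ∃ m0, m0 ∈ f.support := by
    rcases Finset.eq_empty_or_nonempty f.support with he | hne
    · exact absurd (Finsupp.support_eq_empty.mp he) hf0
    · exact hne
  have hsingle : Finsupp.single m0 (1 : ℂ) ∈ N :=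
    extract_mem hHstab f.support.card f hfN m0 hm0 le_rfl
  have hall : ∀ b : ExpLat n, Finsupp.single b (1 : ℂ) ∈ N := fun b =>
    reach_mem hμ hXstab _ m0 b le_rfl hsingle
  rw [eq_top_iff]
  intro g _
  rw [← Finsupp.sum_single g]
  refine N.sum_mem fun m _ => ?_
  have : Finsupp.single m (g m) = (g m) • Finsupp.single m (1 : ℂ) := by
    rw [Finsupp.smul_single, smul_eq_mul, mul_one]
  rw [this]
  exact N.smul_mem _ (hall m)
end

section
/- Let G₀ be a compact locally L-analytic group, H₀ ≤ G₀ an open normal subgroup of finite index n with n invertible in K, and let D_r(G₀) ⊇ D_r(H₀) be compatible Banach completions of the distribution algebras, with D_r(G₀) free of rank n as a left and right D_r(H₀)-module on coset representatives. Then a finitely generated D_r(G₀)-module M is semisimple over D_r(G₀) if and only if it is semisimple over D_r(H₀). -/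
/-- A simple module over `A` is semisimple over the finite-index "subring" `R`. -/
lemma clifford_simple_isSemisimple
    {A : Type*} [Ring A] {R : Type*} [Ring R] (ι : R →+* A)
    {G : Type*} [Group G] [Fintype G] (u : G →* Aˣ)
    (hswap : ∀ (g : G) (x : R), ∃ y : R, (u g : A) * ι x = ι y * (u g : A))
    (hfree_left : Function.Surjective (fun r : G → R => ∑ g : G, (u g : A) * ι (r g)))
    (hfree_right : Function.Surjective (fun r : G → R => ∑ g : G, ι (r g) * (u g : A)))
    (V : Type*) [AddCommGroup V] [Module A V] [Module R V]
    (hcomp : ∀ (x : R) (v : V), x • v = ι x • v)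
    (hsimple : IsSimpleModule A V) :
    IsSemisimpleModule R V := by
  classical
  have huu : ∀ g : G, (u g : A) * (u g⁻¹ : A) = 1 := fun g => by
    rw [← Units.val_mul, ← map_mul, mul_inv_cancel, map_one, Units.val_one]
  have huu' : ∀ g : G, (u g⁻¹ : A) * (u g : A) = 1 := fun g => by
    rw [← Units.val_mul, ← map_mul, inv_mul_cancel, map_one, Units.val_one]
  have hcan : ∀ (g : G) (v : V), (u g : A) • ((u g⁻¹ : A) • v) = v := fun g v => by
    rw [← mul_smul, huu, one_smul]
  have hcan' : ∀ (g : G) (v : V), (u g⁻¹ : A) • ((u g : A) • v) = v := fun g v => by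
    rw [← mul_smul, huu', one_smul]
  -- the twisted submodules
  let tw : G → Submodule R V → Submodule R V := fun g Q =>
    { carrier := {v | (u g⁻¹ : A) • v ∈ Q}
      add_mem' := fun {a b} ha hb => by
        simp only [Set.mem_setOf_eq, smul_add] at *
        exact Q.add_mem ha hb
      zero_mem' := by simp only [Set.mem_setOf_eq, smul_zero]; exact Q.zero_mem
      smul_mem' := fun x v hv => by
        obtain ⟨y, hy⟩ := hswap g⁻¹ x
        simp only [Set.mem_setOf_eq] at hv ⊢
        rw [hcomp, ← mul_smul, hy, mul_smul, ← hcomp]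
        exact Q.smul_mem y hv }
  have mem_tw : ∀ (g : G) (Q : Submodule R V) (v : V), v ∈ tw g Q ↔ (u g⁻¹ : A) • v ∈ Q :=
    fun _ _ _ => Iff.rfl
  -- twisting preserves coatoms
  have tw_coatom : ∀ (g : G) (P : Submodule R V), IsCoatom P → IsCoatom (tw g P) := by
    intro g P hP
    constructor
    · intro htop
      apply hP.1
      rw [eq_top_iff]
      intro v _
      have h1 : (u g : A) • v ∈ tw g P := htop ▸ Submodule.mem_top
      rw [mem_tw, hcan'] at h1
      exact h1
    · intro Q hQ
      have hPle : P ≤ tw g⁻¹ Q := by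
        intro v hv
        rw [mem_tw, inv_inv]
        refine hQ.le ?_
        rw [mem_tw, hcan']
        exact hv
      have hne : P ≠ tw g⁻¹ Q := by
        obtain ⟨w, hwQ, hwP⟩ := SetLike.exists_of_lt hQ
        intro h
        apply hwP
        rw [mem_tw, h, mem_tw, inv_inv, hcan]
        exact hwQ
      have htop := hP.2 (tw g⁻¹ Q) (lt_of_le_of_ne hPle hne)
      rw [eq_top_iff]
      intro v _
      have h1 : (u g⁻¹ : A) • v ∈ tw g⁻¹ Q := htop ▸ Submodule.mem_top
      rw [mem_tw, inv_inv, hcan] at h1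
      exact h1
  -- a maximal `R`-submodule exists
  have hnt : Nontrivial V := hsimple.nontrivial
  obtain ⟨v₀, hv₀⟩ := exists_ne (0 : V)
  have hfg : (⊤ : Submodule R V).FG := by
    refine ⟨Finset.univ.image (fun g => (u g : A) • v₀), ?_⟩
    rw [eq_top_iff]
    intro v _
    obtain ⟨a, ha⟩ := IsSimpleModule.toSpanSingleton_surjective A hv₀ v
    rw [LinearMap.toSpanSingleton_apply] at ha
    obtain ⟨r, hr⟩ := hfree_right a
    simp only at hr
    rw [← ha, ← hr, Finset.sum_smul]
    apply Submodule.sum_mem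
    intro g _
    rw [mul_smul, ← hcomp]
    refine Submodule.smul_mem _ _ (Submodule.subset_span ?_)
    simp only [Finset.coe_image, Set.mem_image, Finset.mem_coe, Finset.mem_univ, true_and]
    exact ⟨g, rfl⟩
  haveI : IsCoatomic (Submodule R V) :=
    CompleteLattice.coatomic_of_top_compact ((Submodule.fg_iff_compact _).mp hfg)
  obtain ⟨P, hP⟩ : ∃ P : Submodule R V, IsCoatom P := by
    rcases (eq_top_or_exists_le_coatom (⊥ : Submodule R V)) with h | ⟨P, hP, _⟩
    · exact absurd h (by
        intro h
        exact hv₀ ((Submodule.mem_bot R).mp (h ▸ Submodule.mem_top)))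
    · exact ⟨P, hP⟩
  -- the infimum of the twists is an A-submodule, hence ⊥
  have hinf_bot : (⨅ g : G, tw g P) = ⊥ := by
    set I := ⨅ g : G, tw g P with hI
    have husmul : ∀ (h : G) (w : V), w ∈ I → (u h : A) • w ∈ I := by
      intro h w hw
      rw [hI, Submodule.mem_iInf] at hw ⊢
      intro g
      rw [mem_tw, ← mul_smul, ← Units.val_mul, ← map_mul]
      have h2 := hw (h⁻¹ * g)
      rw [mem_tw] at h2
      rwa [show g⁻¹ * h = (h⁻¹ * g)⁻¹ by group]
    have hstable : ∀ (a : A) (v : V), v ∈ I → a • v ∈ I := by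
      intro a v hv
      obtain ⟨r, hr⟩ := hfree_left a
      simp only at hr
      rw [← hr, Finset.sum_smul]
      apply Submodule.sum_mem
      intro h _
      rw [mul_smul]
      refine husmul h _ ?_
      rw [← hcomp]
      exact Submodule.smul_mem _ _ hv
    let I' : Submodule A V :=
      { carrier := I
        add_mem' := fun ha hb => I.add_mem ha hb
        zero_mem' := I.zero_mem
        smul_mem' := fun a v hv => hstable a v hv }
    rcases eq_bot_or_eq_top I' with h | h
    · rw [eq_bot_iff]
      intro v hv
      have : v ∈ I' := hv
      rw [h] at this
      exact this
    · exfalso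
      apply (tw_coatom 1 P hP).1
      rw [eq_top_iff]
      intro v _
      have : v ∈ I' := h ▸ Submodule.mem_top
      have : v ∈ I := this
      rw [hI, Submodule.mem_iInf] at this
      exact this 1
  -- embed V into the product of the simple quotients
  haveI hsimp : ∀ g : G, IsSimpleModule R (V ⧸ tw g P) :=
    fun g => (isSimpleModule_iff_isCoatom).mpr (tw_coatom g P hP)
  let f : V →ₗ[R] ∀ g : G, V ⧸ tw g P := LinearMap.pi (fun g => (tw g P).mkQ)
  have hker : LinearMap.ker f = ⊥ := by
    rw [LinearMap.ker_pi]
    simpa only [Submodule.ker_mkQ] using hinf_bot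
  haveI : ∀ g : G, IsSemisimpleModule R (V ⧸ tw g P) := fun g => inferInstance
  haveI : IsSemisimpleModule R (∀ g : G, V ⧸ tw g P) :=
    isSemisimpleModule_of_isSemisimpleModule_submodule'
      (p := fun g => LinearMap.range (LinearMap.single R (fun g => V ⧸ tw g P) g))
      (fun g => IsSemisimpleModule.range _) (LinearMap.iSup_range_single R _)
  haveI : IsSemisimpleModule R (LinearMap.range f) := inferInstance
  exact IsSemisimpleModule.congr (LinearEquiv.ofInjective f (LinearMap.ker_eq_bot.mp hker))


theorem semisimple_iff_semisimple_over_finite_index_subalgebra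
    (K : Type*) [Field K]
    (A : Type*) [Ring A] [Algebra K A]
    (R : Type*) [Ring R] (ι : R →+* A) (hι : Function.Injective ι)
    (G : Type*) [Group G] [Fintype G]
    (hn : ((Fintype.card G : K)) ≠ 0)
    (u : G →* Aˣ)
    -- the units u(g) normalize the subring ι(R)
    (hnorm : ∀ (g : G) (x : R), ∃ y : R, (u g : A) * ι x * ((u g)⁻¹ : Aˣ) = ι y)
    -- A is free as a left and as a right R-module on the u(g)
    (hfree_left : Function.Bijective
      (fun r : G → R => ∑ g : G, (u g : A) * ι (r g)))
    (hfree_right : Function.Bijective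
      (fun r : G → R => ∑ g : G, ι (r g) * (u g : A)))
    -- a finitely generated A-module M, with its restricted R-module structure
    (M : Type*) [AddCommGroup M] [Module A M] [Module.Finite A M]
    [Module R M] (hcomp : ∀ (x : R) (m : M), x • m = ι x • m) :
    IsSemisimpleModule A M ↔ IsSemisimpleModule R M := by
  classical
  have hswap : ∀ (g : G) (x : R), ∃ y : R, (u g : A) * ι x = ι y * (u g : A) := by
    intro g x
    obtain ⟨y, hy⟩ := hnorm g x
    refine ⟨y, ?_⟩
    calc (u g : A) * ι x
        = ((u g : A) * ι x * ((u g)⁻¹ : Aˣ)) * ((u g : Aˣ) : A) := by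
          rw [mul_assoc ((u g : A) * ι x) _ _, Units.inv_mul, mul_one]
      _ = ι y * (u g : A) := by rw [hy]
  have huu : ∀ g : G, (u g : A) * (u g⁻¹ : A) = 1 := fun g => by
    rw [← Units.val_mul, ← map_mul, mul_inv_cancel, map_one, Units.val_one]
  have huu' : ∀ g : G, (u g⁻¹ : A) * (u g : A) = 1 := fun g => by
    rw [← Units.val_mul, ← map_mul, inv_mul_cancel, map_one, Units.val_one]
  have hcan : ∀ (g : G) (m : M), (u g : A) • ((u g⁻¹ : A) • m) = m := fun g m => by
    rw [← mul_smul, huu, one_smul]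
  letI : SMul R A := ⟨fun x a => ι x * a⟩
  haveI : IsScalarTower R A M := ⟨fun x a m => by
    show (ι x * a) • m = x • (a • m)
    rw [mul_smul, ← hcomp]⟩
  constructor
  · -- A-semisimple → R-semisimple
    intro hA
    have key : ∀ p : Submodule A M, IsSimpleModule A ↥p →
        IsSemisimpleModule R ↥(p.restrictScalars R) := by
      intro p hp
      have hss : IsSemisimpleModule R ↥p :=
        clifford_simple_isSemisimple ι u hswap hfree_left.surjective hfree_right.surjective
          ↥p (fun x v => Subtype.ext (hcomp x v.1)) hp
      haveI := hss
      exact IsSemisimpleModule.congr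
        ({ toFun := fun v => (⟨v.1, v.2⟩ : ↥p)
           invFun := fun v => ⟨v.1, v.2⟩
           map_add' := fun _ _ => rfl
           map_smul' := fun _ _ => rfl
           left_inv := fun _ => rfl
           right_inv := fun _ => rfl } : ↥(p.restrictScalars R) ≃ₗ[R] ↥p)
    refine isSemisimpleModule_of_isSemisimpleModule_submodule
      (s := {p : Submodule A M | IsSimpleModule A ↥p})
      (p := fun p => p.restrictScalars R) (fun p hp => key p hp) ?_
    rw [eq_top_iff]
    intro m _
    have hm : m ∈ sSup {p : Submodule A M | IsSimpleModule A ↥p} := by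
      rw [IsSemisimpleModule.sSup_simples_eq_top A M]
      exact Submodule.mem_top
    rw [sSup_eq_iSup, iSup_subtype'] at hm
    refine Submodule.iSup_induction
      (motive := fun z => z ∈ ⨆ p ∈ {p : Submodule A M | IsSimpleModule A ↥p},
        p.restrictScalars R)
      _ hm (fun S x hx => ?_) (Submodule.zero_mem _)
      (fun x y hx hy => Submodule.add_mem _ hx hy)
    exact le_iSup₂ (f := fun (p : Submodule A M) (_ : IsSimpleModule A ↥p) =>
      p.restrictScalars R) S.1 S.2 hx
  · -- R-semisimple → A-semisimple
    intro hR
    refine (isSemisimpleModule_iff A M).mpr ⟨?_⟩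
    intro p
    obtain ⟨q', hq'⟩ := exists_isCompl (p.restrictScalars R)
    set π : M →ₗ[R] M :=
      (p.restrictScalars R).subtype.comp
        ((p.restrictScalars R).linearProjOfIsCompl q' hq') with hπdef
    have hπ_mem : ∀ m : M, π m ∈ p := fun m =>
      ((p.restrictScalars R).linearProjOfIsCompl q' hq' m).2
    have hπ_id : ∀ m ∈ p, π m = m := by
      intro m hm
      show ((p.restrictScalars R).linearProjOfIsCompl q' hq'
        ((⟨m, hm⟩ : p.restrictScalars R) : M) : M) = m
      exact congrArg Subtype.val (Submodule.projectionOnto_apply_left hq' ⟨m, hm⟩)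
    set c : A := algebraMap K A ((Fintype.card G : K)⁻¹) with hc
    set π₀ : M → M := fun m => ∑ g : G, (u g : A) • π ((u g⁻¹ : A) • m) with hπ₀
    set π' : M → M := fun m => c • π₀ m with hπ'
    have hπ₀_add : ∀ m₁ m₂, π₀ (m₁ + m₂) = π₀ m₁ + π₀ m₂ := by
      intro m₁ m₂
      simp only [hπ₀, smul_add, map_add]
      rw [Finset.sum_add_distrib]
    have hπ₀_zero : π₀ 0 = 0 := by simp [hπ₀]
    have hπ'_add : ∀ m₁ m₂, π' (m₁ + m₂) = π' m₁ + π' m₂ := by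
      intro m₁ m₂
      simp only [hπ']
      rw [hπ₀_add, smul_add]
    -- commutation with ι x
    have hπ₀_R : ∀ (x : R) (m : M), π₀ (ι x • m) = ι x • π₀ m := by
      intro x m
      simp only [hπ₀]
      rw [Finset.smul_sum]
      apply Finset.sum_congr rfl
      intro g _
      obtain ⟨y, hy⟩ := hswap g⁻¹ x
      have h1 : (u g⁻¹ : A) • (ι x • m) = ι y • ((u g⁻¹ : A) • m) := by
        rw [← mul_smul, hy, mul_smul]
      have h2 : (u g : A) * ι y = ι x * (u g : A) := by
        calc (u g : A) * ι y
            = (u g : A) * ι y * ((u g⁻¹ : A) * (u g : A)) := by rw [huu', mul_one]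
          _ = (u g : A) * (ι y * (u g⁻¹ : A)) * (u g : A) := by
              rw [← mul_assoc, mul_assoc ((u g : A))]
          _ = (u g : A) * ((u g⁻¹ : A) * ι x) * (u g : A) := by rw [← hy]
          _ = ι x * (u g : A) := by rw [← mul_assoc, huu, one_mul]
      rw [h1, ← hcomp, map_smul, hcomp, ← mul_smul, h2, mul_smul]
    -- commutation with u h
    have hπ₀_U : ∀ (h : G) (m : M), π₀ ((u h : A) • m) = (u h : A) • π₀ m := by
      intro h m
      simp only [hπ₀]
      rw [Finset.smul_sum]
      refine (Fintype.sum_equiv (Equiv.mulLeft h)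
        (fun k => (u h : A) • ((u k : A) • π ((u k⁻¹ : A) • m)))
        (fun g => (u g : A) • π ((u g⁻¹ : A) • ((u h : A) • m))) ?_).symm
      intro k
      show (u h : A) • ((u k : A) • π ((u k⁻¹ : A) • m))
        = (u (h * k) : A) • π ((u (h * k)⁻¹ : A) • ((u h : A) • m))
      have e1 : (u (h * k)⁻¹ : A) • ((u h : A) • m) = (u k⁻¹ : A) • m := by
        rw [← mul_smul, ← Units.val_mul, ← map_mul]
        have : (h * k)⁻¹ * h = k⁻¹ := by group
        rw [this]
      have e2 : (u (h * k) : A) = (u h : A) * (u k : A) := by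
        rw [← Units.val_mul, ← map_mul]
      rw [e1, e2, mul_smul]
    -- A-linearity of π'
    let P0 : M →+ M := ⟨⟨π₀, hπ₀_zero⟩, hπ₀_add⟩
    have hπ'_A : ∀ (a : A) (m : M), π' (a • m) = a • π' m := by
      intro a m
      obtain ⟨r, hr⟩ := hfree_left.surjective a
      simp only at hr
      have h1 : π₀ (a • m) = a • π₀ m := by
        conv_lhs => rw [← hr]
        rw [Finset.sum_smul]
        have : π₀ (∑ g : G, ((u g : A) * ι (r g)) • m)
            = ∑ g : G, π₀ (((u g : A) * ι (r g)) • m) := map_sum P0 _ _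
        rw [this]
        have h2 : ∀ g : G, π₀ (((u g : A) * ι (r g)) • m)
            = ((u g : A) * ι (r g)) • π₀ m := by
          intro g
          rw [mul_smul, hπ₀_U, hπ₀_R, ← mul_smul]
        rw [Finset.sum_congr rfl (fun g _ => h2 g), ← Finset.sum_smul, hr]
      simp only [hπ']
      rw [h1, smul_smul, smul_smul, hc, Algebra.commutes]
    -- π' is the identity on p
    have hπ'_id : ∀ m ∈ p, π' m = m := by
      intro m hm
      have h1 : π₀ m = ((Fintype.card G : ℕ) : A) • m := by
        simp only [hπ₀]
        have hterm : ∀ g : G, (u g : A) • π ((u g⁻¹ : A) • m) = m := by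
          intro g
          rw [hπ_id _ (p.smul_mem _ hm), hcan]
        rw [Finset.sum_congr rfl (fun g _ => hterm g), Finset.sum_const,
          Finset.card_univ, ← Nat.cast_smul_eq_nsmul A]
      simp only [hπ']
      rw [h1, smul_smul, hc, ← map_natCast (algebraMap K A) (Fintype.card G), ← map_mul,
        inv_mul_cancel₀ hn, map_one, one_smul]
    -- π' lands in p
    have hπ'_mem : ∀ m, π' m ∈ p := by
      intro m
      apply p.smul_mem
      simp only [hπ₀]
      exact Submodule.sum_mem _ (fun g _ => p.smul_mem _ (hπ_mem _))
    -- the complement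
    refine ⟨{ carrier := {m | π' m = 0}
              add_mem' := fun {m₁ m₂} h₁ h₂ => by
                simp only [Set.mem_setOf_eq] at h₁ h₂ ⊢
                rw [hπ'_add, h₁, h₂, add_zero]
              zero_mem' := by
                simp only [Set.mem_setOf_eq, hπ']
                rw [hπ₀_zero, smul_zero]
              smul_mem' := fun a m hm => by
                simp only [Set.mem_setOf_eq] at hm ⊢
                rw [hπ'_A, hm, smul_zero] }, ?_⟩
    constructor
    · rw [disjoint_iff_inf_le]
      intro m hm
      obtain ⟨hmp, hmq⟩ := Submodule.mem_inf.mp hm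
      have hq0 : π' m = 0 := hmq
      rw [Submodule.mem_bot, ← hπ'_id m hmp, hq0]
    · rw [codisjoint_iff_le_sup]
      intro m _
      rw [Submodule.mem_sup]
      refine ⟨π' m, hπ'_mem m, m - π' m, ?_, by abel⟩
      show π' (m - π' m) = 0
      have hsub : π' (m - π' m) + π' (π' m) = π' m := by
        rw [← hπ'_add, sub_add_cancel]
      rw [hπ'_id _ (hπ'_mem m)] at hsub
      have := add_right_cancel (b := π' m) (a := π' (m - π' m)) (c := 0)
      rw [zero_add] at this
      exact this hsub
end
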